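/- Pascal's theorem: Let C be a nonsingular conic in the complex projective plane and let a, b, c, d, e, f be six distinct points on C. Then the three intersection points ab ∩ de, bc ∩ ef, cd ∩ af of pairs of opposite sides of the hexagon abcdef are collinear. -/

import Mathlib

open Projectivization

/-- The complex projective plane. -/
abbrev ProjPlane := Projectivization ℂ (Fin 3 → ℂ)

/-- Three points of the projective plane are collinear if their representative
vectors are linearly dependent. -/
def Collin (x y z : ProjPlane) : Prop :=
  ¬ LinearIndependent ℂ ![x.rep, y.rep, z.rep]

/-- The line through two points, as a linear subspace of `ℂ³`. -/
noncomputable def line (x y : ProjPlane) : Submodule ℂ (Fin 3 → ℂ) :=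
  Submodule.span ℂ {x.rep, y.rep}

section PascalAux

open Matrix

set_option linter.unreachableTactic false
set_option linter.unusedTactic false

/-- The standard rational parametrization of the conic `XZ = Y²`. -/
noncomputable def pascalPhi (s t : ℂ) : Fin 3 → ℂ := ![s ^ 2, s * t, t ^ 2]

/-- The core polynomial identity underlying Pascal's theorem. -/
lemma pascal_det (s1 t1 s2 t2 s3 t3 s4 t4 s5 t5 s6 t6 : ℂ) :
    Matrix.det ![(pascalPhi s1 t1 ⨯₃ pascalPhi s2 t2) ⨯₃ (pascalPhi s4 t4 ⨯₃ pascalPhi s5 t5),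
                 (pascalPhi s2 t2 ⨯₃ pascalPhi s3 t3) ⨯₃ (pascalPhi s5 t5 ⨯₃ pascalPhi s6 t6),
                 (pascalPhi s3 t3 ⨯₃ pascalPhi s4 t4) ⨯₃ (pascalPhi s1 t1 ⨯₃ pascalPhi s6 t6)]
      = 0 := by
  erw [Matrix.det_fin_three]
  simp only [pascalPhi, cross_apply, Matrix.det_fin_three, Matrix.cons_val', Matrix.cons_val_zero,
    Matrix.cons_val_one, Matrix.head_cons, Matrix.empty_val', Matrix.cons_val_fin_one,
    Matrix.head_fin_const, Matrix.cons_val_two, Matrix.tail_cons]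
  ring

/-- Dot product with a fixed vector, as a linear functional. -/
noncomputable def pascalDlin (n : Fin 3 → ℂ) : (Fin 3 → ℂ) →ₗ[ℂ] ℂ where
  toFun w := n ⬝ᵥ w
  map_add' u v := by simp [dotProduct_add]
  map_smul' c v := by simp [dotProduct_smul]

lemma pascalDlin_apply (n w : Fin 3 → ℂ) : pascalDlin n w = n ⬝ᵥ w := rfl

lemma pascal_range_pair (u v : Fin 3 → ℂ) : Set.range ![u, v] = {u, v} := by
  ext w
  constructor
  · rintro ⟨i, rfl⟩; fin_cases i <;> simp
  · rintro (rfl | rfl)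
    · exact ⟨0, rfl⟩
    · exact ⟨1, rfl⟩

lemma pascal_finrank_span_pair {u v : Fin 3 → ℂ} (h : LinearIndependent ℂ ![u, v]) :
    Module.finrank ℂ (Submodule.span ℂ {u, v}) = 2 := by
  have := finrank_span_eq_card h
  rw [pascal_range_pair] at this
  simpa using this

/-- A plane spanned by two independent vectors is the kernel of the dot product with
their cross product. -/
lemma pascal_span_pair_eq_ker {u v : Fin 3 → ℂ} (h : LinearIndependent ℂ ![u, v]) :
    Submodule.span ℂ {u, v} = LinearMap.ker (pascalDlin (u ⨯₃ v)) := by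
  have hn : u ⨯₃ v ≠ 0 := crossProduct_ne_zero_iff_linearIndependent.mpr h
  have hle : Submodule.span ℂ {u, v} ≤ LinearMap.ker (pascalDlin (u ⨯₃ v)) := by
    rw [Submodule.span_le]
    intro w hw
    simp only [Set.mem_insert_iff, Set.mem_singleton_iff] at hw
    rcases hw with rfl | rfl
    · simp only [SetLike.mem_coe, LinearMap.mem_ker, pascalDlin_apply]
      rw [dotProduct_comm, dot_self_cross]
    · simp only [SetLike.mem_coe, LinearMap.mem_ker, pascalDlin_apply]
      rw [dotProduct_comm, dot_cross_self]
  have hrange : LinearMap.range (pascalDlin (u ⨯₃ v)) = ⊤ := by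
    obtain ⟨i, hi⟩ := Function.ne_iff.mp hn
    rw [LinearMap.range_eq_top]
    intro c
    simp only [Pi.zero_apply] at hi
    refine ⟨(c / (u ⨯₃ v) i) • (Pi.single i 1 : Fin 3 → ℂ), ?_⟩
    have hsingle : (u ⨯₃ v) ⬝ᵥ (Pi.single i 1 : Fin 3 → ℂ) = (u ⨯₃ v) i := by
      simp [dotProduct, Pi.single_apply]
    simp only [pascalDlin_apply, dotProduct_smul, hsingle, smul_eq_mul]
    field_simp
  have hker : Module.finrank ℂ (LinearMap.ker (pascalDlin (u ⨯₃ v))) = 2 := by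
    have hrn := LinearMap.finrank_range_add_finrank_ker (pascalDlin (u ⨯₃ v))
    rw [hrange] at hrn
    simp only [finrank_top, Module.finrank_self, Module.finrank_fin_fun] at hrn
    omega
  exact Submodule.eq_of_le_of_finrank_le hle (by rw [hker, pascal_finrank_span_pair h])

/-- A nonzero vector in the intersection of two distinct planes is, up to scale, the cross
product of the two normal vectors. -/
lemma pascal_meet (u v u' v' w : Fin 3 → ℂ) (h : LinearIndependent ℂ ![u, v])
    (h' : LinearIndependent ℂ ![u', v'])
    (hne : Submodule.span ℂ {u, v} ≠ Submodule.span ℂ {u', v'})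
    (hw : w ≠ 0) (hw1 : w ∈ Submodule.span ℂ {u, v}) (hw2 : w ∈ Submodule.span ℂ {u', v'}) :
    ∃ c : ℂ, c ≠ 0 ∧ (u ⨯₃ v) ⨯₃ (u' ⨯₃ v') = c • w := by
  set n := u ⨯₃ v with hn_def
  set n' := u' ⨯₃ v' with hn'_def
  have hn : n ≠ 0 := crossProduct_ne_zero_iff_linearIndependent.mpr h
  have hn' : n' ≠ 0 := crossProduct_ne_zero_iff_linearIndependent.mpr h'
  have hnn' : LinearIndependent ℂ ![n, n'] := by
    rw [linearIndependent_fin2]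
    simp only [Matrix.cons_val_one, Matrix.head_cons, Matrix.cons_val_zero]
    refine ⟨hn', fun α hα => ?_⟩
    have hα0 : α ≠ 0 := by rintro rfl; rw [zero_smul] at hα; exact hn hα.symm
    apply hne
    rw [pascal_span_pair_eq_ker h, pascal_span_pair_eq_ker h', ← hn_def, ← hn'_def, ← hα]
    ext w'
    simp [LinearMap.mem_ker, pascalDlin_apply, smul_dotProduct, hα0]
  have hX0 : n ⨯₃ n' ≠ 0 := crossProduct_ne_zero_iff_linearIndependent.mpr hnn'
  set P1 := Submodule.span ℂ {u, v}
  set P2 := Submodule.span ℂ {u', v'}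
  have hmem1 : n ⨯₃ n' ∈ P1 := by
    rw [show P1 = _ from pascal_span_pair_eq_ker h]
    simp only [LinearMap.mem_ker, pascalDlin_apply, ← hn_def]
    exact dot_self_cross n n'
  have hmem2 : n ⨯₃ n' ∈ P2 := by
    rw [show P2 = _ from pascal_span_pair_eq_ker h']
    simp only [LinearMap.mem_ker, pascalDlin_apply, ← hn'_def]
    exact dot_cross_self n n'
  haveI : FiniteDimensional ℂ (Fin 3 → ℂ) := inferInstance
  have hfr1 : Module.finrank ℂ P1 = 2 := pascal_finrank_span_pair h
  have hfr2 : Module.finrank ℂ P2 = 2 := pascal_finrank_span_pair h'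
  have hsup : Module.finrank ℂ ↥(P1 ⊔ P2) ≤ 3 := by
    have := Submodule.finrank_le (P1 ⊔ P2)
    rwa [Module.finrank_fin_fun] at this
  have hsumeq := Submodule.finrank_sup_add_finrank_inf_eq P1 P2
  have hinf_le : Module.finrank ℂ ↥(P1 ⊓ P2) ≤ 2 := by
    have := Submodule.finrank_mono (inf_le_left : P1 ⊓ P2 ≤ P1)
    omega
  have hinf_ne : Module.finrank ℂ ↥(P1 ⊓ P2) ≠ 2 := by
    intro h2
    have e1 : P1 ⊓ P2 = P1 :=
      Submodule.eq_of_le_of_finrank_le inf_le_left (by omega)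
    have e2 : P1 ⊓ P2 = P2 :=
      Submodule.eq_of_le_of_finrank_le inf_le_right (by omega)
    exact hne (e1 ▸ e2)
  have hinf : Module.finrank ℂ ↥(P1 ⊓ P2) = 1 := by omega
  have hspanw : Submodule.span ℂ {w} = P1 ⊓ P2 := by
    refine Submodule.eq_of_le_of_finrank_le ?_ ?_
    · rw [Submodule.span_le, Set.singleton_subset_iff]
      exact ⟨hw1, hw2⟩
    · rw [hinf, finrank_span_singleton hw]
  have : n ⨯₃ n' ∈ Submodule.span ℂ {w} := hspanw ▸ (⟨hmem1, hmem2⟩ : n ⨯₃ n' ∈ P1 ⊓ P2)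
  obtain ⟨c, hc⟩ := Submodule.mem_span_singleton.mp this
  refine ⟨c, fun hc0 => ?_, hc.symm⟩
  rw [hc0, zero_smul] at hc
  exact hX0 hc.symm

/-- Distinct points of the projective plane have independent representatives. -/
lemma pascal_indep_of_ne {p q : ProjPlane} (h : p ≠ q) :
    LinearIndependent ℂ ![p.rep, q.rep] := by
  rw [linearIndependent_fin2]
  simp only [Matrix.cons_val_one, Matrix.head_cons, Matrix.cons_val_zero]
  refine ⟨q.rep_nonzero, fun α hα => h ?_⟩
  have hα0 : α ≠ 0 := by
    rintro rfl; rw [zero_smul] at hα; exact p.rep_nonzero hα.symm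
  have : Projectivization.mk ℂ p.rep p.rep_nonzero =
      Projectivization.mk ℂ q.rep q.rep_nonzero := by
    rw [mk_eq_mk_iff]
    exact ⟨Units.mk0 α hα0, hα⟩
  rwa [mk_rep, mk_rep] at this

/-- Every nonzero point of the conic `XZ = Y²` is a multiple of a parametrized point. -/
lemma pascal_param (v : Fin 3 → ℂ) (hv : v ≠ 0) (h : v 0 * v 2 - v 1 * v 1 = 0) :
    ∃ α s t : ℂ, α ≠ 0 ∧ v = α • pascalPhi s t := by
  by_cases h0 : v 0 = 0
  · have h1 : v 1 = 0 := by
      have : v 1 * v 1 = 0 := by linear_combination v 2 * h0 - h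
      exact mul_self_eq_zero.mp this
    have h2 : v 2 ≠ 0 := by
      intro h2
      apply hv
      funext i; fin_cases i <;> simp [h0, h1, h2]
    refine ⟨v 2, 0, 1, h2, ?_⟩
    funext i; fin_cases i <;> simp [pascalPhi, h0, h1]
  · refine ⟨v 0, 1, v 1 / v 0, h0, ?_⟩
    funext i
    fin_cases i <;> simp [pascalPhi, Pi.smul_apply, smul_eq_mul] <;> field_simp
    all_goals (first | rfl | linear_combination -h | linear_combination h |
      linear_combination v 0 * h | linear_combination -(v 0) * h | ring)

lemma pascal_cross_smul (α β : ℂ) (u v : Fin 3 → ℂ) :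
    (α • u) ⨯₃ (β • v) = (α * β) • (u ⨯₃ v) := by
  funext i
  fin_cases i <;> simp [cross_apply, Pi.smul_apply, smul_eq_mul] <;> ring

noncomputable def pascalG : (Fin 3 → ℂ) →ₗ[ℂ] (Fin 3 → ℂ) where
  toFun v := ![v 0 + Complex.I * v 1, Complex.I * v 2, v 0 - Complex.I * v 1]
  map_add' u v := by funext i; fin_cases i <;> simp <;> ring
  map_smul' c v := by funext i; fin_cases i <;> simp <;> ring

noncomputable def pascalGInv : (Fin 3 → ℂ) →ₗ[ℂ] (Fin 3 → ℂ) where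
  toFun v := ![(v 0 + v 2) / 2, (v 2 - v 0) * Complex.I / 2, -Complex.I * v 1]
  map_add' u v := by funext i; fin_cases i <;> simp <;> ring
  map_smul' c v := by funext i; fin_cases i <;> simp <;> ring

noncomputable def pascalGEquiv : (Fin 3 → ℂ) ≃ₗ[ℂ] (Fin 3 → ℂ) :=
  LinearEquiv.ofLinear pascalG pascalGInv
    (by
      apply LinearMap.ext; intro v
      funext i
      fin_cases i <;>
        simp [pascalG, pascalGInv] <;>
        (first
          | linear_combination (-(v 1) - v 2 / 2 + v 0 / 2) * Complex.I_sq
          | linear_combination (v 0 - v 2) * Complex.I_sq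
          | linear_combination (-2 * v 1) * Complex.I_sq
          | linear_combination (-(v 2) - v 1) * Complex.I_sq
          | linear_combination ((v 2 - v 0) / 2) * Complex.I_sq
          | linear_combination (v 1) * Complex.I_sq
          | linear_combination (-(v 1)) * Complex.I_sq
          | linear_combination (-(v 2)) * Complex.I_sq
          | linear_combination ((v 0 - v 2) / 2) * Complex.I_sq
          | ring))
    (by
      apply LinearMap.ext; intro v
      funext i
      fin_cases i <;>
        simp [pascalG, pascalGInv] <;>
        (first
          | linear_combination (-(v 1) - v 2 / 2 + v 0 / 2) * Complex.I_sq
          | linear_combination (v 0 - v 2) * Complex.I_sq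
          | linear_combination (-2 * v 1) * Complex.I_sq
          | linear_combination (-(v 2) - v 1) * Complex.I_sq
          | linear_combination ((v 2 - v 0) / 2) * Complex.I_sq
          | linear_combination (v 1) * Complex.I_sq
          | linear_combination (-(v 1)) * Complex.I_sq
          | linear_combination (-(v 2)) * Complex.I_sq
          | linear_combination ((v 0 - v 2) / 2) * Complex.I_sq
          | ring))

lemma pascalGEquiv_conic (w : Fin 3 → ℂ) :
    (pascalGEquiv w) 0 * (pascalGEquiv w) 2 - (pascalGEquiv w) 1 * (pascalGEquiv w) 1 =
      w 0 * w 0 + w 1 * w 1 + w 2 * w 2 := by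
  simp [pascalGEquiv, pascalG]
  first
  | linear_combination (- (w 1 * w 1) - w 2 * w 2) * Complex.I_sq
  | linear_combination (w 1 * w 1 + w 2 * w 2) * Complex.I_sq
  | linear_combination (- (w 1 ^ 2) - w 2 ^ 2) * Complex.I_sq
  | linear_combination (w 1 ^ 2 + w 2 ^ 2) * Complex.I_sq

/-- Any quadratic form with nondegenerate polar form on `ℂ³` is, after a linear change of
coordinates, the conic `XZ = Y²`. -/
lemma pascal_diag (Q : QuadraticForm ℂ (Fin 3 → ℂ))
    (hQ : (QuadraticMap.polarBilin Q).Nondegenerate) :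
    ∃ E : (Fin 3 → ℂ) ≃ₗ[ℂ] (Fin 3 → ℂ),
      ∀ v, (E v) 0 * (E v) 2 - (E v) 1 * (E v) 1 = Q v := by
  have hQ' : (QuadraticMap.associated (R := ℂ) Q).SeparatingLeft := by
    intro x hx
    apply hQ.1 x
    intro y
    have h2 := QuadraticMap.two_nsmul_associated ℂ Q
    have : (2 • QuadraticMap.associatedHom ℂ Q) x y = Q.polarBilin x y := by rw [h2]
    simp only [LinearMap.smul_apply, Pi.smul_apply] at this
    rw [← this]
    have hxy : QuadraticMap.associatedHom ℂ Q x y = 0 := hx y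
    rw [hxy]
    simp
  obtain ⟨iso⟩ := QuadraticForm.equivalent_sum_squares Q hQ'
  have hN : Module.finrank ℂ (Fin 3 → ℂ) = 3 := Module.finrank_fin_fun ℂ
  let e : Fin 3 ≃ Fin (Module.finrank ℂ (Fin 3 → ℂ)) := finCongr hN.symm
  let r : (Fin (Module.finrank ℂ (Fin 3 → ℂ)) → ℂ) ≃ₗ[ℂ] (Fin 3 → ℂ) :=
    LinearEquiv.funCongrLeft ℂ ℂ e
  refine ⟨iso.toLinearEquiv.trans (r.trans pascalGEquiv), fun v => ?_⟩
  have happ : (iso.toLinearEquiv.trans (r.trans pascalGEquiv)) v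
      = pascalGEquiv (r (iso v)) := rfl
  rw [happ, pascalGEquiv_conic]
  have hr : ∀ j, r (iso v) j = (iso v) (e j) := fun j => rfl
  rw [hr 0, hr 1, hr 2]
  have := iso.map_app v
  rw [← this, QuadraticMap.weightedSumSquares_apply]
  have hsum := Equiv.sum_comp e (fun i => (iso v) i * (iso v) i)
  simp only [one_smul, Pi.one_apply]
  rw [← hsum]
  exact (Fin.sum_univ_three (fun j => iso v (e j) * iso v (e j))).symm

end PascalAux

/-- **Pascal's theorem.**  Let `Q` be a nonsingular (nondegenerate) quadratic form on `ℂ³`,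
whose zero locus in the projective plane is a nonsingular conic.  Let `a b c d e f` be six
distinct points on this conic, in general position in the sense that the three pairs of
opposite sides `ab, de`, `bc, ef`, `cd, af` consist of distinct lines (so that the three
intersection points are well defined).  If `x, y, z` are the intersection points
`ab ∩ de`, `bc ∩ ef`, `cd ∩ af`, then `x, y, z` are collinear. -/
theorem pascal_theorem
    (Q : QuadraticForm ℂ (Fin 3 → ℂ))
    (hQ : (QuadraticMap.polarBilin Q).Nondegenerate)
    (a b c d e f : ProjPlane)
    (hdist : Function.Injective ![a, b, c, d, e, f])
    (ha : Q a.rep = 0) (hb : Q b.rep = 0) (hc : Q c.rep = 0)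
    (hd : Q d.rep = 0) (he : Q e.rep = 0) (hf : Q f.rep = 0)
    (hab_de : line a b ≠ line d e)
    (hbc_ef : line b c ≠ line e f)
    (hcd_af : line c d ≠ line a f)
    (x y z : ProjPlane)
    (hx1 : x.rep ∈ line a b) (hx2 : x.rep ∈ line d e)
    (hy1 : y.rep ∈ line b c) (hy2 : y.rep ∈ line e f)
    (hz1 : z.rep ∈ line c d) (hz2 : z.rep ∈ line a f) :
    Collin x y z := by
  classical
  open Matrix in
  obtain ⟨E, hE⟩ := pascal_diag Q hQ
  -- pairwise distinctness of the six points
  have hpair : ∀ i j : Fin 6, i ≠ j → ![a, b, c, d, e, f] i ≠ ![a, b, c, d, e, f] j :=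
    fun i j hij hh => hij (hdist hh)
  have hab : a ≠ b := by simpa using hpair 0 1 (by decide)
  have hbc : b ≠ c := by simpa using hpair 1 2 (by decide)
  have hcd : c ≠ d := by simpa using hpair 2 3 (by decide)
  have hde : d ≠ e := by simpa using hpair 3 4 (by decide)
  have hef : e ≠ f := by simpa using hpair 4 5 (by decide)
  have haf : a ≠ f := by simpa using hpair 0 5 (by decide)
  -- transformed vectors
  have mapIndep : ∀ p q : ProjPlane, p ≠ q → LinearIndependent ℂ ![E p.rep, E q.rep] := by
    intro p q hpq
    have h1 := (pascal_indep_of_ne hpq).map' E.toLinearMap E.ker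
    have h2 : (E.toLinearMap ∘ ![p.rep, q.rep]) = ![E p.rep, E q.rep] := by
      funext i; fin_cases i <;> rfl
    rwa [h2] at h1
  have mapSpan : ∀ p q : ProjPlane, Submodule.map E.toLinearMap (line p q)
      = Submodule.span ℂ {E p.rep, E q.rep} := by
    intro p q
    rw [line, Submodule.map_span, Set.image_insert_eq, Set.image_singleton]
    rfl
  have mapMem : ∀ (w : Fin 3 → ℂ) (p q : ProjPlane), w ∈ line p q →
      E w ∈ Submodule.span ℂ {E p.rep, E q.rep} := by
    intro w p q hw
    rw [← mapSpan]
    exact Submodule.mem_map_of_mem hw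
  have mapNe : ∀ p q p' q' : ProjPlane, line p q ≠ line p' q' →
      Submodule.span ℂ {E p.rep, E q.rep} ≠ Submodule.span ℂ {E p'.rep, E q'.rep} := by
    intro p q p' q' hlne hcontra
    rw [← mapSpan, ← mapSpan] at hcontra
    exact hlne (Submodule.map_injective_of_injective E.injective hcontra)
  have hEne : ∀ p : ProjPlane, E p.rep ≠ 0 := by
    intro p h0
    exact p.rep_nonzero (by simpa using E.map_eq_zero_iff.mp h0)
  -- parametrize the six points on the conic
  have hconic : ∀ p : ProjPlane, Q p.rep = 0 →
      ∃ α s t : ℂ, α ≠ 0 ∧ E p.rep = α • pascalPhi s t := by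
    intro p hp
    exact pascal_param _ (hEne p) (by rw [hE]; exact hp)
  obtain ⟨α₁, s₁, t₁, hα₁, hPa⟩ := hconic a ha
  obtain ⟨α₂, s₂, t₂, hα₂, hPb⟩ := hconic b hb
  obtain ⟨α₃, s₃, t₃, hα₃, hPc⟩ := hconic c hc
  obtain ⟨α₄, s₄, t₄, hα₄, hPd⟩ := hconic d hd
  obtain ⟨α₅, s₅, t₅, hα₅, hPe⟩ := hconic e he
  obtain ⟨α₆, s₆, t₆, hα₆, hPf⟩ := hconic f hf
  -- the three intersection points, up to scale, as cross products
  obtain ⟨c₁, hc₁, hX⟩ := pascal_meet (E a.rep) (E b.rep) (E d.rep) (E e.rep) (E x.rep)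
    (mapIndep a b hab) (mapIndep d e hde) (mapNe a b d e hab_de) (hEne x)
    (mapMem _ a b hx1) (mapMem _ d e hx2)
  obtain ⟨c₂, hc₂, hY⟩ := pascal_meet (E b.rep) (E c.rep) (E e.rep) (E f.rep) (E y.rep)
    (mapIndep b c hbc) (mapIndep e f hef) (mapNe b c e f hbc_ef) (hEne y)
    (mapMem _ b c hy1) (mapMem _ e f hy2)
  obtain ⟨c₃, hc₃, hZ⟩ := pascal_meet (E c.rep) (E d.rep) (E a.rep) (E f.rep) (E z.rep)
    (mapIndep c d hcd) (mapIndep a f haf) (mapNe c d a f hcd_af) (hEne z)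
    (mapMem _ c d hz1) (mapMem _ a f hz2)
  rw [hPa, hPb, hPd, hPe, pascal_cross_smul, pascal_cross_smul, pascal_cross_smul] at hX
  rw [hPb, hPc, hPe, hPf, pascal_cross_smul, pascal_cross_smul, pascal_cross_smul] at hY
  rw [hPc, hPd, hPa, hPf, pascal_cross_smul, pascal_cross_smul, pascal_cross_smul] at hZ
  set W1 := (pascalPhi s₁ t₁ ⨯₃ pascalPhi s₂ t₂) ⨯₃ (pascalPhi s₄ t₄ ⨯₃ pascalPhi s₅ t₅) with hW1
  set W2 := (pascalPhi s₂ t₂ ⨯₃ pascalPhi s₃ t₃) ⨯₃ (pascalPhi s₅ t₅ ⨯₃ pascalPhi s₆ t₆) with hW2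
  set W3 := (pascalPhi s₃ t₃ ⨯₃ pascalPhi s₄ t₄) ⨯₃ (pascalPhi s₁ t₁ ⨯₃ pascalPhi s₆ t₆) with hW3
  -- express each E-image as a nonzero multiple of the corresponding W
  set μ₁ : ℂ := c₁⁻¹ * (α₁ * α₂ * (α₄ * α₅)) with hμ₁
  set μ₂ : ℂ := c₂⁻¹ * (α₂ * α₃ * (α₅ * α₆)) with hμ₂
  set μ₃ : ℂ := c₃⁻¹ * (α₃ * α₄ * (α₁ * α₆)) with hμ₃
  have hμ₁0 : μ₁ ≠ 0 := by
    simp [hμ₁, hc₁, hα₁, hα₂, hα₄, hα₅]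
  have hμ₂0 : μ₂ ≠ 0 := by
    simp [hμ₂, hc₂, hα₂, hα₃, hα₅, hα₆]
  have hμ₃0 : μ₃ ≠ 0 := by
    simp [hμ₃, hc₃, hα₃, hα₄, hα₁, hα₆]
  have hXr : E x.rep = μ₁ • W1 := by
    rw [hμ₁, mul_smul, hX, smul_smul, inv_mul_cancel₀ hc₁, one_smul]
  have hYr : E y.rep = μ₂ • W2 := by
    rw [hμ₂, mul_smul, hY, smul_smul, inv_mul_cancel₀ hc₂, one_smul]
  have hZr : E z.rep = μ₃ • W3 := by
    rw [hμ₃, mul_smul, hZ, smul_smul, inv_mul_cancel₀ hc₃, one_smul]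
  -- the determinant identity forces a linear relation among W1, W2, W3
  have hdet : Matrix.det ![W1, W2, W3] = 0 :=
    pascal_det s₁ t₁ s₂ t₂ s₃ t₃ s₄ t₄ s₅ t₅ s₆ t₆
  have hdep : ¬ LinearIndependent ℂ ![W1, W2, W3] := by
    intro hli
    have hli' : LinearIndependent ℂ (fun i => (Matrix.of ![W1, W2, W3]) i) := hli
    have hunit := Matrix.linearIndependent_rows_iff_isUnit.mp hli'
    have := (Matrix.isUnit_iff_isUnit_det _).mp hunit
    rw [show (Matrix.of ![W1, W2, W3]).det = Matrix.det ![W1, W2, W3] from rfl, hdet] at this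
    exact this.ne_zero rfl
  obtain ⟨g, hg, i, hgi⟩ := Fintype.not_linearIndependent_iff.mp hdep
  rw [Fin.sum_univ_three] at hg
  simp only [Matrix.cons_val_zero, Matrix.cons_val_one, Matrix.head_cons,
    Matrix.cons_val_two, Matrix.tail_cons] at hg
  -- transfer the relation back to x.rep, y.rep, z.rep
  unfold Collin
  rw [Fintype.not_linearIndependent_iff]
  refine ⟨![g 0 * μ₁⁻¹, g 1 * μ₂⁻¹, g 2 * μ₃⁻¹], ?_, ⟨i, ?_⟩⟩
  · apply E.injective
    rw [Fin.sum_univ_three]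
    simp only [Matrix.cons_val_zero, Matrix.cons_val_one, Matrix.head_cons,
      Matrix.cons_val_two, Matrix.tail_cons]
    rw [map_add, map_add, _root_.map_smul, _root_.map_smul, _root_.map_smul, map_zero, hXr, hYr, hZr,
      smul_smul, smul_smul, smul_smul]
    rw [mul_assoc, inv_mul_cancel₀ hμ₁0, mul_one, mul_assoc, inv_mul_cancel₀ hμ₂0, mul_one,
      mul_assoc, inv_mul_cancel₀ hμ₃0, mul_one]
    exact hg
  · fin_cases i <;>
      simp only [Matrix.cons_val_zero, Matrix.cons_val_one, Matrix.head_cons,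
        Matrix.cons_val_two, Matrix.tail_cons] at hgi ⊢ <;>
      exact mul_ne_zero hgi (inv_ne_zero (by assumption))
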